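/- In the sphere-padding construction, for every base dataset there exists a finite dimension d > 2 such that λ_max(∇²L(w*)) = λ_b := λ_max(∇²L_b(w*_b)); specifically, any d satisfying d ≥ 2 + c_b/λ_b works, where c_b = (1/n_b)Σᵢ ℓ''(-xᵢᵀw*_b)sᵢ². -/

import Mathlib

open Matrix

noncomputable def sigmoid (z : ℝ) : ℝ := 1 / (1 + Real.exp (-z))

/-- second derivative of the logistic loss ℓ(z) = log(1+exp z). -/
noncomputable def ell'' (z : ℝ) : ℝ := sigmoid z * (1 - sigmoid z)

noncomputable def lambdaMax {ι : Type*} [Fintype ι] (A : Matrix ι ι ℝ) : ℝ :=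
  sSup {t : ℝ | ∃ v : ι → ℝ, v ≠ 0 ∧ A.mulVec v = t • v}


lemma eig_blocks (A : Matrix (Fin 2) (Fin 2) ℝ) (μ : ℝ) (m : ℕ) (hm : 0 < m) :
    {t : ℝ | ∃ v : (Fin 2 ⊕ Fin m) → ℝ, v ≠ 0 ∧
      (Matrix.fromBlocks A 0 0 (μ • (1 : Matrix (Fin m) (Fin m) ℝ))).mulVec v = t • v}
    = {t : ℝ | ∃ v : Fin 2 → ℝ, v ≠ 0 ∧ A.mulVec v = t • v} ∪ {μ} := by
  ext t
  constructor
  · rintro ⟨v, hv, hev⟩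
    set v1 : Fin 2 → ℝ := v ∘ Sum.inl with hv1
    set v2 : Fin m → ℝ := v ∘ Sum.inr with hv2
    have hveq : v = Sum.elim v1 v2 := by funext j; cases j <;> rfl
    rw [hveq] at hev
    have h1 : A.mulVec v1 = t • v1 := by
      funext j
      have := congrFun hev (Sum.inl j)
      simpa [Matrix.fromBlocks_mulVec] using this
    have h2 : μ • v2 = t • v2 := by
      funext j
      have := congrFun hev (Sum.inr j)
      simpa [Matrix.fromBlocks_mulVec, Matrix.smul_mulVec] using this
    by_cases hv2z : v2 = 0
    · left
      refine ⟨v1, ?_, h1⟩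
      intro hv1z
      apply hv
      rw [hveq, hv1z, hv2z]
      funext j; cases j <;> rfl
    · right
      obtain ⟨j, hj⟩ := Function.ne_iff.mp hv2z
      have := congrFun h2 j
      simp only [Pi.smul_apply, smul_eq_mul, Pi.zero_apply] at this hj
      have : μ = t := by
        exact mul_right_cancel₀ hj this
      simp [this]
  · rintro (⟨v1, hv1, h1⟩ | ht)
    · refine ⟨Sum.elim v1 0, ?_, ?_⟩
      · intro h
        apply hv1
        funext j; exact congrFun h (Sum.inl j)
      · funext j
        cases j with
        | inl j => simpa [Matrix.fromBlocks_mulVec] using congrFun h1 j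
        | inr j => simp [Matrix.fromBlocks_mulVec, Matrix.smul_mulVec]
    · simp only [Set.mem_singleton_iff] at ht
      refine ⟨Sum.elim 0 (fun _ => 1), ?_, ?_⟩
      · intro h
        have := congrFun h (Sum.inr ⟨0, hm⟩)
        simpa using this
      · funext j
        cases j with
        | inl j => simp [Matrix.fromBlocks_mulVec]
        | inr j =>
          have : (Matrix.fromBlocks A 0 0 (μ • (1 : Matrix (Fin m) (Fin m) ℝ))).mulVec
              (Sum.elim 0 (fun _ => 1)) (Sum.inr j) = μ • (fun _ : Fin m => (1:ℝ)) j := by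
            rw [show (Sum.elim (0 : Fin 2 → ℝ) (fun _ : Fin m => (1:ℝ))) =
              Sum.elim (0 : Fin 2 → ℝ) (fun _ : Fin m => (1:ℝ)) from rfl,
              Matrix.fromBlocks_mulVec]
            simp [Matrix.smul_mulVec]
          simpa [ht] using this

lemma sSup_union_singleton {S : Set ℝ} {μ L : ℝ} (hL : sSup S = L) (hLpos : 0 < L)
    (hμ : μ ≤ L) : sSup (S ∪ {μ}) = L := by
  have hne : S.Nonempty := by
    rcases Set.eq_empty_or_nonempty S with h | h
    · rw [h, Real.sSup_empty] at hL; linarith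
    · exact h
  have hbdd : BddAbove S := by
    by_contra h
    rw [Real.sSup_of_not_bddAbove h] at hL; linarith
  rw [csSup_union hbdd hne bddAbove_singleton (Set.singleton_nonempty μ), hL,
    csSup_singleton]
  exact sup_eq_left.mpr hμ

theorem sphere_padding_dimension_suffices
    (nb : ℕ) (hnb : 0 < nb)
    (x : Fin nb → (Fin 2 → ℝ)) (hx : ∀ i, Real.sqrt (∑ k, x i k ^ 2) ≤ 1)
    (wb : Fin 2 → ℝ)
    (s : Fin nb → ℝ) (hs : ∀ i, s i = Real.sqrt (1 - ∑ k, x i k ^ 2))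
    (HessBase : Matrix (Fin 2) (Fin 2) ℝ)
    (hHessBase : HessBase =
      (1 / (nb : ℝ)) • ∑ i, ell'' (-(wb ⬝ᵥ x i)) • vecMulVec (x i) (x i))
    (lamb : ℝ) (hlamb : lamb = lambdaMax HessBase) (hlamb_pos : 0 < lamb)
    (cb : ℝ)
    (hcb : cb = (1 / (nb : ℝ)) * ∑ i, ell'' (-(wb ⬝ᵥ x i)) * s i ^ 2) :
    (∃ d : ℕ, 2 < d ∧
      lambdaMax (Matrix.fromBlocks HessBase 0 0
        ((cb / ((d : ℝ) - 2)) • (1 : Matrix (Fin (d - 2)) (Fin (d - 2)) ℝ))) = lamb) ∧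
    (∀ d : ℕ, 2 < d → (2 : ℝ) + cb / lamb ≤ (d : ℝ) →
      lambdaMax (Matrix.fromBlocks HessBase 0 0
        ((cb / ((d : ℝ) - 2)) • (1 : Matrix (Fin (d - 2)) (Fin (d - 2)) ℝ))) = lamb) := by
  have key : ∀ d : ℕ, 2 < d → (2 : ℝ) + cb / lamb ≤ (d : ℝ) →
      lambdaMax (Matrix.fromBlocks HessBase 0 0
        ((cb / ((d : ℝ) - 2)) • (1 : Matrix (Fin (d - 2)) (Fin (d - 2)) ℝ))) = lamb := by
    intro d hd hge
    have hm : 0 < d - 2 := by omega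
    have hd2 : (2 : ℝ) < (d : ℝ) := by exact_mod_cast hd
    have hμ : cb / ((d : ℝ) - 2) ≤ lamb := by
      rw [div_le_iff₀ (by linarith)]
      have h1 : cb / lamb ≤ (d : ℝ) - 2 := by linarith
      nlinarith [(div_le_iff₀ hlamb_pos).mp h1]
    unfold lambdaMax
    rw [eig_blocks HessBase _ _ hm]
    exact sSup_union_singleton hlamb.symm hlamb_pos hμ
  refine ⟨?_, key⟩
  refine ⟨max 3 ⌈(2 : ℝ) + cb / lamb⌉₊, by omega, key _ (by omega) ?_⟩
  calc (2 : ℝ) + cb / lamb ≤ (⌈(2 : ℝ) + cb / lamb⌉₊ : ℝ) := Nat.le_ceil _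
    _ ≤ ((max 3 ⌈(2 : ℝ) + cb / lamb⌉₊ : ℕ) : ℝ) := by
        exact_mod_cast Nat.cast_le.mpr (le_max_right _ _)
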